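/- Let $x^\dagger\in\ell^1$ have infinitely many nonzero components, $\eta>0$, and $\xi^\dagger\in\partial\mathcal{R}_\eta(x^\dagger)$. Then $\|\xi^\dagger-w\|_{\ell^\infty}\ge\eta$ for every $w\in c_0$; in particular, the distance function $d_{\xi^\dagger}(R)=\inf_{\|v\|_Y\le R}\|\xi^\dagger-A^*v\|_{\ell^\infty}$ does not tend to zero as $R\to\infty$. -/

import Mathlib

open Filter Topology

noncomputable section

/-- A sequence in `ℓ²` tends to zero componentwise. -/
lemma lp_two_tendsto_zero (f : lp (fun _ : ℕ => ℝ) 2) :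
    Tendsto (fun k => (f : ∀ _ : ℕ, ℝ) k) atTop (nhds 0) := by
  have hm : Memℓp (fun k => (f : ∀ _ : ℕ, ℝ) k) 2 := lp.memℓp f
  have hs : Summable (fun k => ‖(f : ∀ _ : ℕ, ℝ) k‖ ^ (2:ℝ)) :=
    hm.summable (by norm_num)
  have h0 : Tendsto (fun k => ‖(f : ∀ _ : ℕ, ℝ) k‖ ^ (2:ℝ)) atTop (nhds 0) :=
    hs.tendsto_atTop_zero
  have hsq : Tendsto (fun k => Real.sqrt (‖(f : ∀ _ : ℕ, ℝ) k‖ ^ (2:ℝ)))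
      atTop (nhds 0) := by
    have := (Real.continuous_sqrt.tendsto 0).comp h0
    simpa [Function.comp_def] using this
  have heq : ∀ k, Real.sqrt (‖(f : ∀ _ : ℕ, ℝ) k‖ ^ (2:ℝ)) = |(f : ∀ _ : ℕ, ℝ) k| := by
    intro k
    rw [show ((2:ℝ)) = (2:ℕ) by norm_num, Real.rpow_natCast]
    rw [Real.sqrt_sq_eq_abs]
    exact abs_abs _
  have habs : Tendsto (fun k => |(f : ∀ _ : ℕ, ℝ) k|) atTop (nhds 0) := hsq.congr heq
  exact (tendsto_zero_iff_abs_tendsto_zero _).mpr habs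

/-- Let `x† ∈ ℓ¹` have infinitely many nonzero components, `η > 0`, and
`ξ† ∈ ∂R_η(x†)`. Then `‖ξ† - w‖_∞ ≥ η` for every `w ∈ c₀` (in the form: for every
`ε > 0` some component of `ξ† - w` exceeds `η - ε`); in particular, the distance
function `d_{ξ†}(R) = inf_{‖v‖_Y ≤ R} ‖ξ† - A* v‖_∞` does not tend to zero as
`R → ∞`. -/
theorem subgradient_dist_to_c0_ge_eta
    {Y : Type*} [NormedAddCommGroup Y] [InnerProductSpace ℝ Y] [CompleteSpace Y]
    (A : lp (fun _ : ℕ => ℝ) 2 →L[ℝ] Y)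
    (x : ℕ → ℝ) (hx1 : Memℓp x 1) (hx0 : {k : ℕ | x k ≠ 0}.Infinite)
    (η : ℝ) (hη : 0 < η) (ξ ζ : ℕ → ℝ)
    (hζ : ∀ k, (0 < x k → ζ k = 1) ∧ (x k < 0 → ζ k = -1) ∧ ζ k ∈ Set.Icc (-1 : ℝ) 1)
    (hξ : ∀ k, ξ k = η * ζ k + x k) :
    (∀ w : ℕ → ℝ, Tendsto w atTop (nhds 0) →
        ∀ ε > 0, ∃ k, η - ε < |ξ k - w k|) ∧
      ¬ Tendsto
          (fun R : ℝ => sInf {s : ℝ | ∃ v : Y, ‖v‖ ≤ R ∧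
              s = ⨆ k : ℕ, |ξ k - (ContinuousLinearMap.adjoint A v : ∀ _ : ℕ, ℝ) k|})
          atTop (nhds 0) := by
  -- `x` tends to zero
  have hxsum : Summable (fun k => ‖x k‖ ^ (1:ℝ)) := hx1.summable (by norm_num)
  have hx_t0 : Tendsto x atTop (nhds 0) := by
    rw [tendsto_zero_iff_abs_tendsto_zero]
    simpa [Function.comp_def] using hxsum.tendsto_atTop_zero
  -- Part A
  have partA : ∀ w : ℕ → ℝ, Tendsto w atTop (nhds 0) →
      ∀ ε > 0, ∃ k, η - ε < |ξ k - w k| := by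
    intro w hw ε hε
    have hsum : Tendsto (fun k => |x k| + |w k|) atTop (nhds 0) := by
      have := ((tendsto_zero_iff_abs_tendsto_zero x).mp hx_t0).add
        ((tendsto_zero_iff_abs_tendsto_zero w).mp hw)
      simpa [Function.comp] using this
    have hev : ∀ᶠ k in atTop, |x k| + |w k| < ε :=
      (hsum.eventually (gt_mem_nhds hε))
    obtain ⟨N, hN⟩ := eventually_atTop.mp hev
    obtain ⟨k, hk, hNk⟩ := hx0.exists_gt N
    refine ⟨k, ?_⟩
    have hxk : x k ≠ 0 := hk
    have hζk : |ζ k| = 1 := by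
      rcases lt_or_gt_of_ne hxk with h | h
      · rw [(hζ k).2.1 h]; norm_num
      · rw [(hζ k).1 h]; norm_num
    have h1 : η - (|x k| + |w k|) ≤ |ξ k - w k| := by
      have : |η * ζ k| - |x k + -w k| ≤ |η * ζ k + (x k + -w k)| := by
        have t := abs_add_le (η * ζ k + (x k + -w k)) (-(x k + -w k))
        have e : η * ζ k + (x k + -w k) + -(x k + -w k) = η * ζ k := by ring
        rw [e, abs_neg] at t
        linarith
      have habs : |η * ζ k| = η := by
        rw [abs_mul, hζk, abs_of_pos hη, mul_one]
      have h2 : |x k + -w k| ≤ |x k| + |w k| := (abs_add_le _ _).trans (by rw [abs_neg])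
      calc η - (|x k| + |w k|) ≤ |η * ζ k| - |x k + -w k| := by
            rw [habs]; linarith
        _ ≤ |η * ζ k + (x k + -w k)| := this
        _ = |ξ k - w k| := by rw [hξ k]; ring_nf
    have := hN k (le_of_lt hNk)
    linarith
  refine ⟨partA, ?_⟩
  -- Part B
  intro hcon
  -- each element of the set is ≥ η (for R ≥ 0 the set is nonempty)
  have key : ∀ R : ℝ, 0 ≤ R → η ≤ sInf {s : ℝ | ∃ v : Y, ‖v‖ ≤ R ∧
      s = ⨆ k : ℕ, |ξ k - (ContinuousLinearMap.adjoint A v : ∀ _ : ℕ, ℝ) k|} := by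
    intro R hR
    apply le_csInf
    · exact ⟨_, 0, by simpa using hR, rfl⟩
    · rintro s ⟨v, -, rfl⟩
      set w : ℕ → ℝ := fun k => (ContinuousLinearMap.adjoint A v : ∀ _ : ℕ, ℝ) k with hwdef
      have hw : Tendsto w atTop (nhds 0) := lp_two_tendsto_zero _
      -- the family is bounded above
      have hb : Tendsto (fun k => η + (|x k| + |w k|)) atTop (nhds (η + 0)) := by
        apply Tendsto.add tendsto_const_nhds
        have := ((tendsto_zero_iff_abs_tendsto_zero x).mp hx_t0).add
          ((tendsto_zero_iff_abs_tendsto_zero w).mp hw)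
        simpa [Function.comp] using this
      obtain ⟨C, hC⟩ := hb.bddAbove_range
      have hbdd : BddAbove (Set.range fun k => |ξ k - w k|) := by
        refine ⟨C, ?_⟩
        rintro t ⟨k, rfl⟩
        have h1 : |ξ k - w k| ≤ η + (|x k| + |w k|) := by
          have : |ξ k - w k| ≤ |η * ζ k| + |x k| + |w k| := by
            rw [hξ k]
            calc |η * ζ k + x k - w k| ≤ |η * ζ k + x k| + |w k| := by
                  simpa using abs_sub (η * ζ k + x k) (w k)
              _ ≤ |η * ζ k| + |x k| + |w k| := by linarith [abs_add_le (η * ζ k) (x k)]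
          have h2 : |η * ζ k| ≤ η := by
            rw [abs_mul, abs_of_pos hη]
            nlinarith [abs_le.mpr (hζ k).2.2, abs_nonneg (ζ k), (abs_le.mp (le_refl |ζ k|))]
          linarith
        exact h1.trans (hC ⟨k, rfl⟩)
      apply le_of_forall_sub_le
      intro ε hε
      obtain ⟨k, hk⟩ := partA w hw ε hε
      exact le_trans (le_of_lt hk) (le_ciSup hbdd k)
  -- contradiction
  have h1 : ∀ᶠ R in (atTop : Filter ℝ), sInf {s : ℝ | ∃ v : Y, ‖v‖ ≤ R ∧
      s = ⨆ k : ℕ, |ξ k - (ContinuousLinearMap.adjoint A v : ∀ _ : ℕ, ℝ) k|} < η := by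
    have := hcon.eventually (gt_mem_nhds hη)
    simpa using this
  have h2 : ∀ᶠ R in (atTop : Filter ℝ), (0:ℝ) ≤ R := eventually_ge_atTop 0
  obtain ⟨R, hR1, hR2⟩ := (h1.and h2).exists
  exact absurd (key R hR2) (not_le.mpr hR1)
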